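/- Let H_T, H_t ∈ ℝ^{n×n} be positive semidefinite with H_t ≼ H_T (i.e., H_T − H_t positive semidefinite), and let Π₀ ∈ ℝ^{n×n}. If the operator norm of H_T^{1/2} Π₀ H_T^{1/2} is strictly less than 1, then the operator norm of H_t^{1/2} Π₀ H_t^{1/2} is strictly less than 1. -/

import Mathlib

open Matrix

open scoped ComplexOrder

namespace Matrix.PosSemidef

open scoped ComplexOrder

/-- The positive semidefinite square root of a positive semidefinite matrix (as in the older Mathlib). -/
noncomputable def sqrt {n : Type*} [Fintype n] [DecidableEq n] {𝕜 : Type*} [RCLike 𝕜]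
    {A : Matrix n n 𝕜} (hA : PosSemidef A) : Matrix n n 𝕜 :=
  hA.1.eigenvectorUnitary.1 * diagonal ((↑) ∘ (√·) ∘ hA.1.eigenvalues) *
  (star hA.1.eigenvectorUnitary : Matrix n n 𝕜)

end Matrix.PosSemidef

namespace Matrix.PosSemidef

lemma posSemidef_sqrt {m : Type*} [Fintype m] [DecidableEq m] {A : Matrix m m ℝ}
    (hA : PosSemidef A) : PosSemidef hA.sqrt := by
  unfold sqrt
  have hD : (diagonal ((↑) ∘ (√·) ∘ hA.1.eigenvalues) : Matrix m m ℝ).PosSemidef :=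
    PosSemidef.diagonal (by intro i; simp [Real.sqrt_nonneg])
  convert hD.mul_mul_conjTranspose_same (hA.1.eigenvectorUnitary : Matrix m m ℝ) using 1
  rw [star_eq_conjTranspose]
  rfl

lemma sqrt_mul_self {m : Type*} [Fintype m] [DecidableEq m] {A : Matrix m m ℝ}
    (hA : PosSemidef A) : hA.sqrt * hA.sqrt = A := by
  unfold sqrt
  have hU : star (hA.1.eigenvectorUnitary : Matrix m m ℝ) * hA.1.eigenvectorUnitary = 1 :=
    Unitary.star_mul_self_of_mem hA.1.eigenvectorUnitary.2
  simp only [mul_assoc]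
  rw [← mul_assoc (star _) (hA.1.eigenvectorUnitary : Matrix m m ℝ), hU, one_mul,
    ← mul_assoc (diagonal _), diagonal_mul_diagonal]
  conv_rhs => rw [hA.1.spectral_theorem]
  rw [Unitary.conjStarAlgAut_apply, mul_assoc]
  congr 3
  funext i
  simp [Real.mul_self_sqrt (hA.eigenvalues_nonneg i)]

end Matrix.PosSemidef

set_option maxHeartbeats 1000000

noncomputable section

namespace Stmt10Aux

open scoped RealInnerProductSpace
open ContinuousLinearMap

variable {n : ℕ}

local notation "T" => Matrix.toEuclideanCLM (𝕜 := ℝ) (n := Fin n)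

lemma adj_eq (M : Matrix (Fin n) (Fin n) ℝ) :
    ContinuousLinearMap.adjoint (T M) = T (star M) := by
  rw [← ContinuousLinearMap.star_eq_adjoint, ← map_star]

lemma nrm_star (M : Matrix (Fin n) (Fin n) ℝ) : ‖T (star M)‖ = ‖T M‖ := by
  rw [← adj_eq]
  exact ContinuousLinearMap.adjoint.norm_map _

lemma inner_nonneg {M : Matrix (Fin n) (Fin n) ℝ} (hM : M.PosSemidef)
    (x : EuclideanSpace ℝ (Fin n)) : 0 ≤ ⟪x, T M x⟫ := by
  rw [EuclideanSpace.inner_eq_star_dotProduct]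
  simpa [dotProduct_comm] using hM.dotProduct_mulVec_nonneg (WithLp.ofLp x)

lemma nrm_mono {X Y : Matrix (Fin n) (Fin n) ℝ} (hX : X.PosSemidef)
    (hXY : (Y - X).PosSemidef) : ‖T X‖ ≤ ‖T Y‖ := by
  have hs : star hX.sqrt = hX.sqrt := hX.posSemidef_sqrt.isHermitian
  have hss : hX.sqrt * hX.sqrt = X := hX.sqrt_mul_self
  set S : EuclideanSpace ℝ (Fin n) →L[ℝ] EuclideanSpace ℝ (Fin n) := T hX.sqrt with hS
  have hTX : T X = S * S := by rw [← hss, _root_.map_mul]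
  have hadj : ContinuousLinearMap.adjoint S = S := by rw [hS, adj_eq, hs]
  have key : ∀ z : EuclideanSpace ℝ (Fin n), ‖S z‖ ^ 2 ≤ ‖T Y‖ * ‖z‖ ^ 2 := by
    intro z
    have h1 : ‖S z‖ ^ 2 = ⟪z, T X z⟫ := by
      rw [hTX, ← real_inner_self_eq_norm_sq]
      have h := ContinuousLinearMap.adjoint_inner_right S z (S z)
      rw [hadj] at h
      rw [ContinuousLinearMap.mul_apply]
      exact h.symm
    have h2 : ⟪z, T X z⟫ ≤ ⟪z, T Y z⟫ := by
      have h0 := inner_nonneg hXY z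
      rw [map_sub, ContinuousLinearMap.sub_apply, inner_sub_right] at h0
      linarith
    have h3 : ⟪z, T Y z⟫ ≤ ‖T Y‖ * ‖z‖ ^ 2 := by
      calc ⟪z, T Y z⟫ ≤ ‖z‖ * ‖T Y z‖ := real_inner_le_norm _ _
        _ ≤ ‖z‖ * (‖T Y‖ * ‖z‖) := by
            gcongr; exact (T Y).le_opNorm z
        _ = ‖T Y‖ * ‖z‖ ^ 2 := by ring
    linarith
  have hSnorm : ‖S‖ ≤ Real.sqrt ‖T Y‖ := by
    apply ContinuousLinearMap.opNorm_le_bound _ (Real.sqrt_nonneg _)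
    intro z
    calc ‖S z‖ = Real.sqrt (‖S z‖ ^ 2) := (Real.sqrt_sq (norm_nonneg _)).symm
      _ ≤ Real.sqrt (‖T Y‖ * ‖z‖ ^ 2) := Real.sqrt_le_sqrt (key z)
      _ = Real.sqrt ‖T Y‖ * ‖z‖ := by
          rw [Real.sqrt_mul (norm_nonneg _), Real.sqrt_sq (norm_nonneg _)]
  have hTXnorm : ‖T X‖ = ‖S‖ ^ 2 := by
    have h := ContinuousLinearMap.norm_adjoint_comp_self S
    rw [hadj] at h
    rw [hTX]
    calc ‖S * S‖ = ‖S ∘L S‖ := rfl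
      _ = ‖S‖ * ‖S‖ := h
      _ = ‖S‖ ^ 2 := (sq ‖S‖).symm
  calc ‖T X‖ = ‖S‖ ^ 2 := hTXnorm
    _ ≤ Real.sqrt ‖T Y‖ ^ 2 := pow_le_pow_left₀ (norm_nonneg _) hSnorm 2
    _ = ‖T Y‖ := Real.sq_sqrt (norm_nonneg _)

lemma nrm_sq (M : Matrix (Fin n) (Fin n) ℝ) :
    ‖T M‖ ^ 2 = ‖T (M * star M)‖ := by
  have h := ContinuousLinearMap.norm_adjoint_comp_self
    (ContinuousLinearMap.adjoint (T M))
  rw [ContinuousLinearMap.adjoint_adjoint] at h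
  have hn : ‖ContinuousLinearMap.adjoint (T M)‖ = ‖T M‖ :=
    ContinuousLinearMap.adjoint.norm_map _
  rw [hn] at h
  have hc : T M ∘L ContinuousLinearMap.adjoint (T M) = T (M * star M) := by
    rw [adj_eq, _root_.map_mul]
    rfl
  rw [← hc, h, sq]

lemma step {Ht HT : Matrix (Fin n) (Fin n) ℝ} (hHt : Ht.PosSemidef) (hHT : HT.PosSemidef)
    (hle : (HT - Ht).PosSemidef) (B : Matrix (Fin n) (Fin n) ℝ) :
    ‖T (B * hHt.sqrt)‖ ≤ ‖T (B * hHT.sqrt)‖ := by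
  have key : ∀ (X : Matrix (Fin n) (Fin n) ℝ) (hX : X.PosSemidef),
      ‖T (B * hX.sqrt)‖ ^ 2 = ‖T (B * X * star B)‖ := by
    intro X hX
    have hs : star hX.sqrt = hX.sqrt := hX.posSemidef_sqrt.isHermitian
    rw [nrm_sq]
    congr 2
    calc B * hX.sqrt * star (B * hX.sqrt)
        = B * hX.sqrt * (hX.sqrt * star B) := by rw [StarMul.star_mul, hs]
      _ = B * (hX.sqrt * hX.sqrt) * star B := by noncomm_ring
      _ = B * X * star B := by rw [hX.sqrt_mul_self]
  have hmono : ‖T (B * Ht * star B)‖ ≤ ‖T (B * HT * star B)‖ := by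
    apply nrm_mono
    · rw [Matrix.star_eq_conjTranspose]
      exact hHt.mul_mul_conjTranspose_same B
    · have h : B * HT * star B - B * Ht * star B = B * (HT - Ht) * star B := by
        noncomm_ring
      rw [h, Matrix.star_eq_conjTranspose]
      exact hle.mul_mul_conjTranspose_same B
  have hsq : ‖T (B * hHt.sqrt)‖ ^ 2 ≤ ‖T (B * hHT.sqrt)‖ ^ 2 := by
    rw [key Ht hHt, key HT hHT]; exact hmono
  exact (pow_le_pow_iff_left₀ (norm_nonneg _) (norm_nonneg _) two_ne_zero).mp hsq

end Stmt10Aux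

end

/-- If `0 ⪯ H_t ⪯ H_T` and the spectral norm of `H_T^{1/2} Π₀ H_T^{1/2}` is less than one,
then the spectral norm of `H_t^{1/2} Π₀ H_t^{1/2}` is less than one. -/
theorem stmt10 {n : ℕ} (HT Ht Pi0 : Matrix (Fin n) (Fin n) ℝ)
    (hHT : HT.PosSemidef) (hHt : Ht.PosSemidef) (hle : (HT - Ht).PosSemidef)
    (hnorm : ‖Matrix.toEuclideanCLM (𝕜 := ℝ) (hHT.sqrt * Pi0 * hHT.sqrt)‖ < 1) :
    ‖Matrix.toEuclideanCLM (𝕜 := ℝ) (hHt.sqrt * Pi0 * hHt.sqrt)‖ < 1 := by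
  have hsT : star hHT.sqrt = hHT.sqrt := hHT.posSemidef_sqrt.isHermitian
  have hst : star hHt.sqrt = hHt.sqrt := hHt.posSemidef_sqrt.isHermitian
  have h1 : ‖Matrix.toEuclideanCLM (𝕜 := ℝ) (hHt.sqrt * Pi0 * hHt.sqrt)‖
      ≤ ‖Matrix.toEuclideanCLM (𝕜 := ℝ) (hHt.sqrt * Pi0 * hHT.sqrt)‖ :=
    Stmt10Aux.step hHt hHT hle (hHt.sqrt * Pi0)
  have e2 : star (hHt.sqrt * Pi0 * hHT.sqrt) = hHT.sqrt * star Pi0 * hHt.sqrt := by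
    rw [StarMul.star_mul, StarMul.star_mul, hsT, hst, ← mul_assoc]
  have h2 : ‖Matrix.toEuclideanCLM (𝕜 := ℝ) (hHt.sqrt * Pi0 * hHT.sqrt)‖
      = ‖Matrix.toEuclideanCLM (𝕜 := ℝ) (hHT.sqrt * star Pi0 * hHt.sqrt)‖ := by
    rw [← Stmt10Aux.nrm_star (hHt.sqrt * Pi0 * hHT.sqrt), e2]
  have h3 : ‖Matrix.toEuclideanCLM (𝕜 := ℝ) (hHT.sqrt * star Pi0 * hHt.sqrt)‖
      ≤ ‖Matrix.toEuclideanCLM (𝕜 := ℝ) (hHT.sqrt * star Pi0 * hHT.sqrt)‖ :=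
    Stmt10Aux.step hHt hHT hle (hHT.sqrt * star Pi0)
  have e4 : star (hHT.sqrt * Pi0 * hHT.sqrt) = hHT.sqrt * star Pi0 * hHT.sqrt := by
    rw [StarMul.star_mul, StarMul.star_mul, hsT, ← mul_assoc]
  have h4 : ‖Matrix.toEuclideanCLM (𝕜 := ℝ) (hHT.sqrt * star Pi0 * hHT.sqrt)‖
      = ‖Matrix.toEuclideanCLM (𝕜 := ℝ) (hHT.sqrt * Pi0 * hHT.sqrt)‖ := by
    rw [← e4, Stmt10Aux.nrm_star]
  calc ‖Matrix.toEuclideanCLM (𝕜 := ℝ) (hHt.sqrt * Pi0 * hHt.sqrt)‖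
      ≤ ‖Matrix.toEuclideanCLM (𝕜 := ℝ) (hHt.sqrt * Pi0 * hHT.sqrt)‖ := h1
    _ = ‖Matrix.toEuclideanCLM (𝕜 := ℝ) (hHT.sqrt * star Pi0 * hHt.sqrt)‖ := h2
    _ ≤ ‖Matrix.toEuclideanCLM (𝕜 := ℝ) (hHT.sqrt * star Pi0 * hHT.sqrt)‖ := h3
    _ = ‖Matrix.toEuclideanCLM (𝕜 := ℝ) (hHT.sqrt * Pi0 * hHT.sqrt)‖ := h4
    _ < 1 := hnorm
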